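/- Let D ≥ 1 be an integer, E = ℂ^D with canonical basis (e_k), and let R_P ⊂ E^{⊗3} be the linear span of {e_ℓ⊗e_m⊗e_k − e_ℓ⊗e_k⊗e_m : 1 ≤ k < ℓ ≤ m ≤ D} ∪ {e_k⊗e_m⊗e_ℓ − e_m⊗e_k⊗e_ℓ : 1 ≤ k ≤ ℓ < m ≤ D}. Then inside E^{⊗5} one has (R_P⊗E⊗E) ∩ (E⊗R_P⊗E) ∩ (E⊗E⊗R_P) = 0; equivalently, the degree-5 homogeneous component of the dual cubic algebra P^! vanishes (and hence all components of degree ≥ 5 vanish). -/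

import Mathlib

set_option maxSynthPendingDepth 5

open TensorProduct

/-- The canonical basis vector `e_k` of `ℂ^D`. -/
noncomputable def stdBasis (D : ℕ) (k : Fin D) : Fin D → ℂ := Pi.single k 1

/-- The relation space `R_P ⊂ (ℂ^D)^{⊗3}` of the plactic algebra: the span of the Knuth
relation tensors `e_ℓ⊗e_m⊗e_k - e_ℓ⊗e_k⊗e_m` for `k < ℓ ≤ m` and
`e_k⊗e_m⊗e_ℓ - e_m⊗e_k⊗e_ℓ` for `k ≤ ℓ < m`. -/
noncomputable def placticRelations (D : ℕ) :
    Submodule ℂ ((Fin D → ℂ) ⊗[ℂ] ((Fin D → ℂ) ⊗[ℂ] (Fin D → ℂ))) :=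
  Submodule.span ℂ
    ({t | ∃ k l m : Fin D, k < l ∧ l ≤ m ∧
        t = stdBasis D l ⊗ₜ[ℂ] (stdBasis D m ⊗ₜ[ℂ] stdBasis D k)
            - stdBasis D l ⊗ₜ[ℂ] (stdBasis D k ⊗ₜ[ℂ] stdBasis D m)} ∪
      {t | ∃ k l m : Fin D, k ≤ l ∧ l < m ∧
        t = stdBasis D k ⊗ₜ[ℂ] (stdBasis D m ⊗ₜ[ℂ] stdBasis D l)
            - stdBasis D m ⊗ₜ[ℂ] (stdBasis D k ⊗ₜ[ℂ] stdBasis D l)})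

section Embeddings

variable (E : Type*) [AddCommGroup E] [Module ℂ E]

/-- Reassociation `E^{⊗3} ⊗ E^{⊗2} ≃ E^{⊗5}`. -/
noncomputable def assocFive :
    ((E ⊗[ℂ] (E ⊗[ℂ] E)) ⊗[ℂ] (E ⊗[ℂ] E)) ≃ₗ[ℂ]
      E ⊗[ℂ] (E ⊗[ℂ] (E ⊗[ℂ] (E ⊗[ℂ] E))) :=
  (TensorProduct.assoc ℂ E (E ⊗[ℂ] E) (E ⊗[ℂ] E)).trans
    (TensorProduct.congr (LinearEquiv.refl ℂ E) (TensorProduct.assoc ℂ E E (E ⊗[ℂ] E)))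

/-- Reassociation `E^{⊗3} ⊗ E ≃ E^{⊗4}`. -/
noncomputable def assocFour :
    ((E ⊗[ℂ] (E ⊗[ℂ] E)) ⊗[ℂ] E) ≃ₗ[ℂ] E ⊗[ℂ] (E ⊗[ℂ] (E ⊗[ℂ] E)) :=
  (TensorProduct.assoc ℂ E (E ⊗[ℂ] E) E).trans
    (TensorProduct.congr (LinearEquiv.refl ℂ E) (TensorProduct.assoc ℂ E E E))

variable {E}

/-- The subspace `R ⊗ E ⊗ E` of `E^{⊗5}` determined by a subspace `R ⊆ E^{⊗3}`. -/
noncomputable def subREE (R : Submodule ℂ (E ⊗[ℂ] (E ⊗[ℂ] E))) :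
    Submodule ℂ (E ⊗[ℂ] (E ⊗[ℂ] (E ⊗[ℂ] (E ⊗[ℂ] E)))) :=
  Submodule.map (assocFive E).toLinearMap
    (LinearMap.range (TensorProduct.map R.subtype (LinearMap.id (M := E ⊗[ℂ] E))))

/-- The subspace `R ⊗ E` of `E^{⊗4}` determined by a subspace `R ⊆ E^{⊗3}`. -/
noncomputable def subRE (R : Submodule ℂ (E ⊗[ℂ] (E ⊗[ℂ] E))) :
    Submodule ℂ (E ⊗[ℂ] (E ⊗[ℂ] (E ⊗[ℂ] E))) :=
  Submodule.map (assocFour E).toLinearMap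
    (LinearMap.range (TensorProduct.map R.subtype (LinearMap.id (M := E))))

/-- The subspace `E ⊗ p` of `E ⊗ M` determined by a subspace `p ⊆ M`. -/
noncomputable def subEl {M : Type*} [AddCommMonoid M] [Module ℂ M] (p : Submodule ℂ M) :
    Submodule ℂ (E ⊗[ℂ] M) :=
  LinearMap.range (p.subtype.lTensor E)

/-- The subspace `E ⊗ R ⊗ E` of `E^{⊗5}`. -/
noncomputable def subERE (R : Submodule ℂ (E ⊗[ℂ] (E ⊗[ℂ] E))) :
    Submodule ℂ (E ⊗[ℂ] (E ⊗[ℂ] (E ⊗[ℂ] (E ⊗[ℂ] E)))) :=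
  subEl (subRE R)

/-- The subspace `E ⊗ E ⊗ R` of `E^{⊗5}`. -/
noncomputable def subEER (R : Submodule ℂ (E ⊗[ℂ] (E ⊗[ℂ] E))) :
    Submodule ℂ (E ⊗[ℂ] (E ⊗[ℂ] (E ⊗[ℂ] (E ⊗[ℂ] E)))) :=
  subEl (subEl R)

end Embeddings
set_option synthInstance.maxHeartbeats 1000000
set_option maxHeartbeats 1000000
namespace PlacticAux
noncomputable def dpair {M N : Type*} [AddCommMonoid M] [Module ℂ M] [AddCommMonoid N]
    [Module ℂ N] (f : M →ₗ[ℂ] ℂ) (g : N →ₗ[ℂ] ℂ) : M ⊗[ℂ] N →ₗ[ℂ] ℂ :=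
  TensorProduct.lift ((LinearMap.mul ℂ ℂ).compl₁₂ f g)

variable {M N M' N' : Type*} [AddCommMonoid M] [Module ℂ M] [AddCommMonoid N] [Module ℂ N]
  [AddCommMonoid M'] [Module ℂ M'] [AddCommMonoid N'] [Module ℂ N']

@[simp] lemma dpair_tmul (f : M →ₗ[ℂ] ℂ) (g : N →ₗ[ℂ] ℂ) (m : M) (n : N) :
    dpair f g (m ⊗ₜ n) = f m * g n := by simp [dpair]

lemma dpair_comp_map (f : M →ₗ[ℂ] ℂ) (g : N →ₗ[ℂ] ℂ) (h : M' →ₗ[ℂ] M) (k : N' →ₗ[ℂ] N) :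
    (dpair f g).comp (TensorProduct.map h k) = dpair (f.comp h) (g.comp k) :=
  TensorProduct.ext' fun m n => by simp

lemma dpair_zero_left (g : N →ₗ[ℂ] ℂ) : dpair (0 : M →ₗ[ℂ] ℂ) g = 0 :=
  TensorProduct.ext' fun m n => by simp

lemma dpair_add_left (f f' : M →ₗ[ℂ] ℂ) (g : N →ₗ[ℂ] ℂ) :
    dpair (f + f') g = dpair f g + dpair f' g :=
  TensorProduct.ext' fun m n => by simp [add_mul]

lemma dpair_add_right (f : M →ₗ[ℂ] ℂ) (g g' : N →ₗ[ℂ] ℂ) :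
    dpair f (g + g') = dpair f g + dpair f g' :=
  TensorProduct.ext' fun m n => by simp [mul_add]

noncomputable def cf (D : ℕ) (a : Fin D) : (Fin D → ℂ) →ₗ[ℂ] ℂ := LinearMap.proj a

@[simp] lemma cf_single (a k : Fin D) : cf D a (stdBasis D k) = if a = k then 1 else 0 := by
  simp [cf, stdBasis, Pi.single_apply]

noncomputable def φ2 (d e : Fin D) : ((Fin D → ℂ) ⊗[ℂ] (Fin D → ℂ)) →ₗ[ℂ] ℂ :=
  dpair (cf D d) (cf D e)

noncomputable def φ3 (c d e : Fin D) :
    ((Fin D → ℂ) ⊗[ℂ] ((Fin D → ℂ) ⊗[ℂ] (Fin D → ℂ))) →ₗ[ℂ] ℂ :=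
  dpair (cf D c) (φ2 d e)

noncomputable def φ4 (b c d e : Fin D) :
    ((Fin D → ℂ) ⊗[ℂ] ((Fin D → ℂ) ⊗[ℂ] ((Fin D → ℂ) ⊗[ℂ] (Fin D → ℂ)))) →ₗ[ℂ] ℂ :=
  dpair (cf D b) (φ3 c d e)

noncomputable def φ5 (a b c d e : Fin D) :
    ((Fin D → ℂ) ⊗[ℂ]
      ((Fin D → ℂ) ⊗[ℂ] ((Fin D → ℂ) ⊗[ℂ] ((Fin D → ℂ) ⊗[ℂ] (Fin D → ℂ))))) →ₗ[ℂ] ℂ :=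
  dpair (cf D a) (φ4 b c d e)

def W (f : Fin D → Fin D → Fin D → ℂ) : Prop :=
  ∀ a b c : Fin D,
    (a ≤ b → b ≤ c → f a b c = 0) ∧
    (c < b → b < a → f a b c = 0) ∧
    (c < a → a ≤ b → f a b c + f a c b = 0) ∧
    (a ≤ c → c < b → f a b c + f b a c = 0)

set_option maxHeartbeats 1000000 in
lemma rel3 {t : (Fin D → ℂ) ⊗[ℂ] ((Fin D → ℂ) ⊗[ℂ] (Fin D → ℂ))}
    (ht : t ∈ placticRelations D) : W (fun a b c => φ3 a b c t) := by
  induction ht using Submodule.span_induction with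
  | mem x hx =>
    intro a b c
    obtain ⟨k, l, m, hkl, hlm, rfl⟩ | ⟨k, l, m, hkl, hlm, rfl⟩ := hx
    all_goals refine ⟨fun h1 h2 => ?_, fun h1 h2 => ?_, fun h1 h2 => ?_, fun h1 h2 => ?_⟩
    all_goals simp only [φ3, φ2, map_sub, LinearMap.sub_apply, dpair_tmul, cf_single]
    all_goals split_ifs
    all_goals (try norm_num)
    all_goals (exfalso; omega)
  | zero =>
    intro a b c
    refine ⟨fun _ _ => ?_, fun _ _ => ?_, fun _ _ => ?_, fun _ _ => ?_⟩ <;>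
      simp only [LinearMap.map_zero, add_zero]
  | add x y _ _ hx hy =>
    intro a b c
    refine ⟨fun u v => ?_, fun u v => ?_, fun u v => ?_, fun u v => ?_⟩ <;>
      simp only [LinearMap.map_add]
    · have e1 : φ3 a b c x = 0 := (hx a b c).1 u v
      have e2 : φ3 a b c y = 0 := (hy a b c).1 u v
      rw [e1, e2, add_zero]
    · have e1 : φ3 a b c x = 0 := (hx a b c).2.1 u v
      have e2 : φ3 a b c y = 0 := (hy a b c).2.1 u v
      rw [e1, e2, add_zero]
    · have e1 : φ3 a b c x + φ3 a c b x = 0 := (hx a b c).2.2.1 u v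
      have e2 : φ3 a b c y + φ3 a c b y = 0 := (hy a b c).2.2.1 u v
      linear_combination e1 + e2
    · have e1 : φ3 a b c x + φ3 b a c x = 0 := (hx a b c).2.2.2 u v
      have e2 : φ3 a b c y + φ3 b a c y = 0 := (hy a b c).2.2.2 u v
      linear_combination e1 + e2
  | smul r x _ hx =>
    intro a b c
    refine ⟨fun u v => ?_, fun u v => ?_, fun u v => ?_, fun u v => ?_⟩ <;>
      simp only [LinearMap.map_smul, smul_eq_mul]
    · have e1 : φ3 a b c x = 0 := (hx a b c).1 u v
      rw [e1, mul_zero]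
    · have e1 : φ3 a b c x = 0 := (hx a b c).2.1 u v
      rw [e1, mul_zero]
    · have e1 : φ3 a b c x + φ3 a c b x = 0 := (hx a b c).2.2.1 u v
      linear_combination r * e1
    · have e1 : φ3 a b c x + φ3 b a c x = 0 := (hx a b c).2.2.2 u v
      linear_combination r * e1


lemma phi5_assoc (a b c d e : Fin D) :
    (φ5 a b c d e).comp (assocFive (Fin D → ℂ)).toLinearMap =
      dpair (φ3 a b c) (φ2 d e) := by
  ext u v w p q
  simp only [assocFive, φ5, φ4, φ3, φ2, LinearEquiv.trans_apply, LinearEquiv.coe_coe,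
    LinearMap.coe_comp, Function.comp_apply, TensorProduct.AlgebraTensorModule.curry_apply,
    TensorProduct.curry_apply, LinearMap.coe_restrictScalars,
    TensorProduct.assoc_tmul, TensorProduct.congr_tmul, LinearEquiv.refl_apply, dpair_tmul]
  ring

lemma phi4_assoc (b c d e : Fin D) :
    (φ4 b c d e).comp (assocFour (Fin D → ℂ)).toLinearMap =
      dpair (φ3 b c d) (cf D e) := by
  ext u v w p
  simp only [assocFour, φ4, φ3, φ2, LinearEquiv.trans_apply, LinearEquiv.coe_coe,
    LinearMap.coe_comp, Function.comp_apply, TensorProduct.AlgebraTensorModule.curry_apply,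
    TensorProduct.curry_apply, LinearMap.coe_restrictScalars,
    TensorProduct.assoc_tmul, TensorProduct.congr_tmul, LinearEquiv.refl_apply, dpair_tmul]
  ring


lemma vanish_REE {R : Submodule ℂ ((Fin D → ℂ) ⊗[ℂ] ((Fin D → ℂ) ⊗[ℂ] (Fin D → ℂ)))}
    (f : ((Fin D → ℂ) ⊗[ℂ] ((Fin D → ℂ) ⊗[ℂ] (Fin D → ℂ))) →ₗ[ℂ] ℂ)
    (hf : ∀ t ∈ R, f t = 0)
    (g : ((Fin D → ℂ) ⊗[ℂ] (Fin D → ℂ)) →ₗ[ℂ] ℂ)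
    {x} (hx : x ∈ subREE R) :
    dpair f g ((assocFive (Fin D → ℂ)).symm x) = 0 := by
  obtain ⟨z, hz, rfl⟩ := hx
  obtain ⟨y, rfl⟩ := hz
  rw [LinearEquiv.coe_coe, LinearEquiv.symm_apply_apply, ← LinearMap.comp_apply,
    dpair_comp_map, LinearMap.comp_id]
  have h2 : f.comp R.subtype = 0 := LinearMap.ext fun t => hf t t.2
  rw [h2, dpair_zero_left, LinearMap.zero_apply]

lemma vanish_RE {R : Submodule ℂ ((Fin D → ℂ) ⊗[ℂ] ((Fin D → ℂ) ⊗[ℂ] (Fin D → ℂ)))}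
    (f : ((Fin D → ℂ) ⊗[ℂ] ((Fin D → ℂ) ⊗[ℂ] (Fin D → ℂ))) →ₗ[ℂ] ℂ)
    (hf : ∀ t ∈ R, f t = 0)
    (g : (Fin D → ℂ) →ₗ[ℂ] ℂ)
    {x} (hx : x ∈ subRE R) :
    dpair f g ((assocFour (Fin D → ℂ)).symm x) = 0 := by
  obtain ⟨z, hz, rfl⟩ := hx
  obtain ⟨y, rfl⟩ := hz
  rw [LinearEquiv.coe_coe, LinearEquiv.symm_apply_apply, ← LinearMap.comp_apply,
    dpair_comp_map, LinearMap.comp_id]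
  have h2 : f.comp R.subtype = 0 := LinearMap.ext fun t => hf t t.2
  rw [h2, dpair_zero_left, LinearMap.zero_apply]

lemma dpair_zero_right (f : M →ₗ[ℂ] ℂ) : dpair f (0 : N →ₗ[ℂ] ℂ) = 0 :=
  TensorProduct.ext' fun m n => by simp

lemma vanish_El {M : Type*} [AddCommMonoid M] [Module ℂ M] {p : Submodule ℂ M}
    (g : (Fin D → ℂ) →ₗ[ℂ] ℂ) (f : M →ₗ[ℂ] ℂ) (hf : ∀ t ∈ p, f t = 0)
    {x : (Fin D → ℂ) ⊗[ℂ] M} (hx : x ∈ subEl p) : dpair g f x = 0 := by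
  obtain ⟨y, rfl⟩ := hx
  rw [← LinearMap.comp_apply]
  have key : (dpair g f).comp (p.subtype.lTensor (Fin D → ℂ)) =
      dpair g (f.comp p.subtype) := TensorProduct.ext' fun m n => by simp
  have h2 : f.comp p.subtype = 0 := LinearMap.ext fun t => hf t t.2
  rw [key, h2, dpair_zero_right, LinearMap.zero_apply]

lemma phi5_symm (a b c d e : Fin D) (x) :
    φ5 a b c d e x = dpair (φ3 a b c) (φ2 d e) ((assocFive (Fin D → ℂ)).symm x) := by
  have := congrArg (fun (L : _ →ₗ[ℂ] ℂ) => L ((assocFive (Fin D → ℂ)).symm x))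
    (phi5_assoc a b c d e)
  simpa using this

lemma phi4_symm (b c d e : Fin D) (x) :
    φ4 b c d e x = dpair (φ3 b c d) (cf D e) ((assocFour (Fin D → ℂ)).symm x) := by
  have := congrArg (fun (L : _ →ₗ[ℂ] ℂ) => L ((assocFour (Fin D → ℂ)).symm x))
    (phi4_assoc b c d e)
  simpa using this

lemma win0 {x} (hx : x ∈ subREE (placticRelations D)) (d e : Fin D) :
    W (fun a b c => φ5 a b c d e x) := by
  refine fun a b c => ⟨fun h1 h2 => ?_, fun h1 h2 => ?_, fun h1 h2 => ?_, fun h1 h2 => ?_⟩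
  · show φ5 a b c d e x = 0
    rw [phi5_symm]
    exact vanish_REE _ (fun t ht => (rel3 ht a b c).1 h1 h2) _ hx
  · show φ5 a b c d e x = 0
    rw [phi5_symm]
    exact vanish_REE _ (fun t ht => (rel3 ht a b c).2.1 h1 h2) _ hx
  · show φ5 a b c d e x + φ5 a c b d e x = 0
    rw [phi5_symm, phi5_symm, ← LinearMap.add_apply, ← dpair_add_left]
    exact vanish_REE _ (fun t ht => by
      rw [LinearMap.add_apply]
      exact (rel3 ht a b c).2.2.1 h1 h2) _ hx
  · show φ5 a b c d e x + φ5 b a c d e x = 0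
    rw [phi5_symm, phi5_symm, ← LinearMap.add_apply, ← dpair_add_left]
    exact vanish_REE _ (fun t ht => by
      rw [LinearMap.add_apply]
      exact (rel3 ht a b c).2.2.2 h1 h2) _ hx

lemma rel4 {t} (ht : t ∈ subRE (placticRelations D)) (e : Fin D) :
    W (fun b c d => φ4 b c d e t) := by
  refine fun b c d => ⟨fun h1 h2 => ?_, fun h1 h2 => ?_, fun h1 h2 => ?_, fun h1 h2 => ?_⟩
  · show φ4 b c d e t = 0
    rw [phi4_symm]
    exact vanish_RE _ (fun s hs => (rel3 hs b c d).1 h1 h2) _ ht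
  · show φ4 b c d e t = 0
    rw [phi4_symm]
    exact vanish_RE _ (fun s hs => (rel3 hs b c d).2.1 h1 h2) _ ht
  · show φ4 b c d e t + φ4 b d c e t = 0
    rw [phi4_symm, phi4_symm, ← LinearMap.add_apply, ← dpair_add_left]
    exact vanish_RE _ (fun s hs => by
      rw [LinearMap.add_apply]
      exact (rel3 hs b c d).2.2.1 h1 h2) _ ht
  · show φ4 b c d e t + φ4 c b d e t = 0
    rw [phi4_symm, phi4_symm, ← LinearMap.add_apply, ← dpair_add_left]
    exact vanish_RE _ (fun s hs => by
      rw [LinearMap.add_apply]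
      exact (rel3 hs b c d).2.2.2 h1 h2) _ ht

lemma win1 {x} (hx : x ∈ subERE (placticRelations D)) (a e : Fin D) :
    W (fun b c d => φ5 a b c d e x) := by
  refine fun b c d => ⟨fun h1 h2 => ?_, fun h1 h2 => ?_, fun h1 h2 => ?_, fun h1 h2 => ?_⟩
  · exact vanish_El _ _ (fun t ht => (rel4 ht e b c d).1 h1 h2) hx
  · exact vanish_El _ _ (fun t ht => (rel4 ht e b c d).2.1 h1 h2) hx
  · show dpair (cf D a) (φ4 b c d e) x + dpair (cf D a) (φ4 b d c e) x = 0
    rw [← LinearMap.add_apply, ← dpair_add_right]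
    exact vanish_El _ _ (fun t ht => by
      rw [LinearMap.add_apply]
      exact (rel4 ht e b c d).2.2.1 h1 h2) hx
  · show dpair (cf D a) (φ4 b c d e) x + dpair (cf D a) (φ4 c b d e) x = 0
    rw [← LinearMap.add_apply, ← dpair_add_right]
    exact vanish_El _ _ (fun t ht => by
      rw [LinearMap.add_apply]
      exact (rel4 ht e b c d).2.2.2 h1 h2) hx

lemma rel4' {t} (ht : t ∈ subEl (placticRelations D)) (b : Fin D) :
    W (fun c d e => φ4 b c d e t) := by
  refine fun c d e => ⟨fun h1 h2 => ?_, fun h1 h2 => ?_, fun h1 h2 => ?_, fun h1 h2 => ?_⟩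
  · exact vanish_El _ _ (fun s hs => (rel3 hs c d e).1 h1 h2) ht
  · exact vanish_El _ _ (fun s hs => (rel3 hs c d e).2.1 h1 h2) ht
  · show dpair (cf D b) (φ3 c d e) t + dpair (cf D b) (φ3 c e d) t = 0
    rw [← LinearMap.add_apply, ← dpair_add_right]
    exact vanish_El _ _ (fun s hs => by
      rw [LinearMap.add_apply]
      exact (rel3 hs c d e).2.2.1 h1 h2) ht
  · show dpair (cf D b) (φ3 c d e) t + dpair (cf D b) (φ3 d c e) t = 0
    rw [← LinearMap.add_apply, ← dpair_add_right]
    exact vanish_El _ _ (fun s hs => by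
      rw [LinearMap.add_apply]
      exact (rel3 hs c d e).2.2.2 h1 h2) ht

lemma win2 {x} (hx : x ∈ subEER (placticRelations D)) (a b : Fin D) :
    W (fun c d e => φ5 a b c d e x) := by
  refine fun c d e => ⟨fun h1 h2 => ?_, fun h1 h2 => ?_, fun h1 h2 => ?_, fun h1 h2 => ?_⟩
  · exact vanish_El _ _ (fun t ht => (rel4' ht b c d e).1 h1 h2) hx
  · exact vanish_El _ _ (fun t ht => (rel4' ht b c d e).2.1 h1 h2) hx
  · show dpair (cf D a) (φ4 b c d e) x + dpair (cf D a) (φ4 b c e d) x = 0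
    rw [← LinearMap.add_apply, ← dpair_add_right]
    exact vanish_El _ _ (fun t ht => by
      rw [LinearMap.add_apply]
      exact (rel4' ht b c d e).2.2.1 h1 h2) hx
  · show dpair (cf D a) (φ4 b c d e) x + dpair (cf D a) (φ4 b d c e) x = 0
    rw [← LinearMap.add_apply, ← dpair_add_right]
    exact vanish_El _ _ (fun t ht => by
      rw [LinearMap.add_apply]
      exact (rel4' ht b c d e).2.2.2 h1 h2) hx


lemma comb (F : Fin D → Fin D → Fin D → Fin D → Fin D → ℂ)
    (h0 : ∀ d e, W (fun a b c => F a b c d e))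
    (h1 : ∀ a e, W (fun b c d => F a b c d e))
    (h2 : ∀ a b, W (fun c d e => F a b c d e))
    (a b c d e : Fin D) : F a b c d e = 0 := by
  have z : ∀ a b c d e : Fin D,
      ((a ≤ b ∧ b ≤ c ∨ c < b ∧ b < a) ∨ (b ≤ c ∧ c ≤ d ∨ d < c ∧ c < b) ∨
        (c ≤ d ∧ d ≤ e ∨ e < d ∧ d < c)) → F a b c d e = 0 := by
    rintro a b c d e ((⟨u, v⟩ | ⟨u, v⟩) | (⟨u, v⟩ | ⟨u, v⟩) | (⟨u, v⟩ | ⟨u, v⟩))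
    · exact (h0 d e a b c).1 u v
    · exact (h0 d e a b c).2.1 u v
    · exact (h1 a e b c d).1 u v
    · exact (h1 a e b c d).2.1 u v
    · exact (h2 a b c d e).1 u v
    · exact (h2 a b c d e).2.1 u v
  by_cases hz : (a ≤ b ∧ b ≤ c ∨ c < b ∧ b < a) ∨ (b ≤ c ∧ c ≤ d ∨ d < c ∧ c < b) ∨
      (c ≤ d ∧ d ≤ e ∨ e < d ∧ d < c)
  · exact z a b c d e hz
  · have hcase : (c < a ∧ a ≤ b ∨ b < a ∧ a ≤ c) ∨ (a ≤ c ∧ c < b ∨ b ≤ c ∧ c < a) := by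
      omega
    rcases hcase with (⟨u, v⟩ | ⟨u, v⟩) | (⟨u, v⟩ | ⟨u, v⟩)
    · have e1 : F a b c d e + F a c b d e = 0 := (h0 d e a b c).2.2.1 u v
      have e2 : F a c b d e = 0 := z a c b d e (by omega)
      linear_combination e1 - e2
    · have e1 : F a c b d e + F a b c d e = 0 := (h0 d e a c b).2.2.1 u v
      have e2 : F a c b d e = 0 := z a c b d e (by omega)
      linear_combination e1 - e2
    · have e1 : F a b c d e + F b a c d e = 0 := (h0 d e a b c).2.2.2 u v
      have e2 : F b a c d e = 0 := z b a c d e (by omega)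
      linear_combination e1 - e2
    · have e1 : F b a c d e + F a b c d e = 0 := (h0 d e b a c).2.2.2 u v
      have e2 : F b a c d e = 0 := z b a c d e (by omega)
      linear_combination e1 - e2

lemma cf_apply (a : Fin D) (v : Fin D → ℂ) : cf D a v = v a := rfl

lemma ite_prod_eq (i1 i2 i3 i4 i5 j1 j2 j3 j4 j5 : Fin D) :
    (if j1 = i1 ∧ j2 = i2 ∧ j3 = i3 ∧ j4 = i4 ∧ j5 = i5 then (1 : ℂ) else 0) =
    (if i1 = j1 then (1 : ℂ) else 0) *
      ((if i2 = j2 then (1 : ℂ) else 0) *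
        ((if i3 = j3 then (1 : ℂ) else 0) *
          ((if i4 = j4 then (1 : ℂ) else 0) * (if i5 = j5 then (1 : ℂ) else 0)))) := by
  by_cases q1 : i1 = j1 <;> by_cases q2 : i2 = j2 <;> by_cases q3 : i3 = j3 <;>
    by_cases q4 : i4 = j4 <;> by_cases q5 : i5 = j5 <;>
    simp [q1, q2, q3, q4, q5, eq_comm]

lemma eq_zero_of_phi5
    {x : (Fin D → ℂ) ⊗[ℂ]
      ((Fin D → ℂ) ⊗[ℂ] ((Fin D → ℂ) ⊗[ℂ] ((Fin D → ℂ) ⊗[ℂ] (Fin D → ℂ))))}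
    (h : ∀ a b c d e : Fin D, φ5 a b c d e x = 0) : x = 0 := by
  classical
  let B := Pi.basisFun ℂ (Fin D)
  let B5 := B.tensorProduct (B.tensorProduct (B.tensorProduct (B.tensorProduct B)))
  have hcoord : ∀ i : Fin D × Fin D × Fin D × Fin D × Fin D,
      B5.coord i = φ5 i.1 i.2.1 i.2.2.1 i.2.2.2.1 i.2.2.2.2 := by
    intro i
    apply B5.ext
    rintro ⟨j1, j2, j3, j4, j5⟩
    obtain ⟨i1, i2, i3, i4, i5⟩ := i
    have hB5 : B5 (j1, j2, j3, j4, j5) =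
        (B j1) ⊗ₜ[ℂ] ((B j2) ⊗ₜ[ℂ] ((B j3) ⊗ₜ[ℂ] ((B j4) ⊗ₜ[ℂ] (B j5)))) := by
      simp only [B5, Module.Basis.tensorProduct_apply]
    have hBval : ∀ a k : Fin D, (B k) a = if a = k then 1 else 0 := by
      intro a k
      simp [B, Pi.basisFun_apply, Pi.single_apply]
    rw [Module.Basis.coord_apply, Module.Basis.repr_self_apply, hB5]
    simp only [φ5, φ4, φ3, φ2, dpair_tmul, cf_apply, hBval, Prod.mk.injEq]
    exact ite_prod_eq i1 i2 i3 i4 i5 j1 j2 j3 j4 j5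
  have hrepr : B5.repr x = 0 := by
    ext i
    rw [← Module.Basis.coord_apply, hcoord i]
    exact h _ _ _ _ _
  have := congrArg B5.repr.symm hrepr
  rw [LinearEquiv.symm_apply_apply] at this
  simpa using this

end PlacticAux

/-- Inside `(ℂ^D)^{⊗5}` one has `(R_P⊗E⊗E) ∩ (E⊗R_P⊗E) ∩ (E⊗E⊗R_P) = 0`:
the degree-5 component of the dual cubic algebra `P^!` of the plactic algebra vanishes
(and hence all components of degree ≥ 5 vanish). -/
theorem plactic_dual_degree_five_vanishes (D : ℕ) (hD : 1 ≤ D) :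
    subREE (placticRelations D) ⊓ subERE (placticRelations D) ⊓
        subEER (placticRelations D) = ⊥ := by
  rw [eq_bot_iff]
  intro x hx
  rw [Submodule.mem_inf, Submodule.mem_inf] at hx
  obtain ⟨⟨hx1, hx2⟩, hx3⟩ := hx
  rw [Submodule.mem_bot]
  exact PlacticAux.eq_zero_of_phi5 (fun a b c d e =>
    PlacticAux.comb (fun a b c d e => PlacticAux.φ5 a b c d e x)
      (fun d e => PlacticAux.win0 hx1 d e)
      (fun a e => PlacticAux.win1 hx2 a e)
      (fun a b => PlacticAux.win2 hx3 a b) a b c d e)
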